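/- Let E be a real normed space, f, g : E → ℝ convex and continuous, C ⊆ E convex, and suppose the Slater condition holds: there is x₀ ∈ C with g(x₀) < 0. If x̄ ∈ C satisfies g(x̄) ≤ 0 and minimizes f over {x ∈ C : g(x) ≤ 0}, then there exists γ ≥ 0 such that x̄ minimizes x ↦ f(x) + γ·max(g(x), 0) over C, and γ·g(x̄) = 0 (complementary slackness). -/

import Mathlib

/-- Lagrange principle for a Slater-regular convex program: if `xbar` minimizes `f`
over `{x ∈ C | g x ≤ 0}`, there is a multiplier `γ ≥ 0` such that `xbar` minimizes
the Lagrangian `f + γ · g⁺` over `C`, with complementary slackness `γ · g xbar = 0`. -/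
theorem stmt_14 {E : Type*} [NormedAddCommGroup E] [NormedSpace ℝ E]
    {C : Set E} (hC : Convex ℝ C) {f g : E → ℝ}
    (hf : ConvexOn ℝ Set.univ f) (hg : ConvexOn ℝ Set.univ g)
    (hfc : Continuous f) (hgc : Continuous g)
    (hslater : ∃ x₀ ∈ C, g x₀ < 0)
    {xbar : E} (hxbar : xbar ∈ C) (hfeas : g xbar ≤ 0)
    (hmin : ∀ x ∈ C, g x ≤ 0 → f xbar ≤ f x) :
    ∃ γ : ℝ, 0 ≤ γ ∧
      (∀ x ∈ C, f xbar + γ * max (g xbar) 0 ≤ f x + γ * max (g x) 0) ∧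
      γ * g xbar = 0 := by
  obtain ⟨x₀, hx₀C, hgx₀⟩ := hslater
  -- Key segment trick: for y ∈ C with g y < 0 and x ∈ C with g x > 0,
  -- the point on [x, y] where the convex bound on g vanishes is feasible.
  have key : ∀ y ∈ C, g y < 0 → ∀ x ∈ C, 0 < g x →
      (g x + (-g y)) * f xbar ≤ (-g y) * f x + g x * f y := by
    intro y hyC hgy x hxC hgx
    set a := -g y with ha
    have ha0 : 0 < a := by simp [ha]; linarith
    have hden : 0 < g x + a := by linarith
    set t := a / (g x + a) with ht
    have ht0 : 0 < t := div_pos ha0 hden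
    have ht1 : t < 1 := by rw [ht, div_lt_one hden]; linarith
    have h1t : 1 - t = g x / (g x + a) := by
      rw [ht]; field_simp; ring
    set z := t • x + (1 - t) • y with hz
    have hzC : z ∈ C := hC hxC hyC ht0.le (by linarith) (by ring)
    have hgz : g z ≤ t * g x + (1 - t) * g y :=
      hg.2 (Set.mem_univ x) (Set.mem_univ y) ht0.le (by linarith) (by ring)
    have hcomb : t * g x + (1 - t) * g y = 0 := by
      rw [h1t, ht]
      field_simp
      ring
    have hgz0 : g z ≤ 0 := by linarith
    have hfz : f z ≤ t * f x + (1 - t) * f y :=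
      hf.2 (Set.mem_univ x) (Set.mem_univ y) ht0.le (by linarith) (by ring)
    have hmz := hmin z hzC hgz0
    have hle : f xbar ≤ t * f x + (1 - t) * f y := le_trans hmz hfz
    rw [ht, h1t] at hle
    have h2 := mul_le_mul_of_nonneg_left hle hden.le
    have h3 : (g x + a) * (a / (g x + a) * f x + g x / (g x + a) * f y)
        = a * f x + g x * f y := by field_simp
    linarith [h3 ▸ h2]
  rcases lt_or_eq_of_le hfeas with hlt | heq
  · -- g xbar < 0 : γ = 0 works, xbar is an unconstrained minimizer over C
    refine ⟨0, le_refl 0, ?_, by ring⟩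
    intro x hxC
    simp only [zero_mul, add_zero]
    rcases le_or_gt (g x) 0 with hgx | hgx
    · exact hmin x hxC hgx
    · have h := key xbar hxbar hlt x hxC hgx
      have hb : 0 < -g xbar := by linarith
      nlinarith
  · -- g xbar = 0
    set a := -g x₀ with ha
    have ha0 : 0 < a := by simp [ha]; linarith
    set γ₀ := (f x₀ - f xbar) / a with hγ₀
    refine ⟨max γ₀ 0, le_max_right _ _, ?_, by rw [heq, mul_zero]⟩
    intro x hxC
    have hmx : max (g xbar) 0 = 0 := max_eq_right hfeas
    rw [hmx, mul_zero, add_zero]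
    rcases le_or_gt (g x) 0 with hgx | hgx
    · have : max (g x) 0 = 0 := max_eq_right hgx
      rw [this, mul_zero, add_zero]
      exact hmin x hxC hgx
    · have hmgx : max (g x) 0 = g x := max_eq_left hgx.le
      rw [hmgx]
      have h := key x₀ hx₀C hgx₀ x hxC hgx
      have hγa : γ₀ * a = f x₀ - f xbar := by
        rw [hγ₀]; field_simp
      have hge : γ₀ ≤ max γ₀ 0 := le_max_left _ _
      rw [← ha] at h
      -- enough: f xbar ≤ f x + γ₀ * g x
      have h1 : 0 ≤ a * (f x + γ₀ * g x - f xbar) := by nlinarith [hγa, h, hgx]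
      have h2 : 0 ≤ f x + γ₀ * g x - f xbar := (mul_nonneg_iff_of_pos_left ha0).mp h1
      linarith [mul_le_mul_of_nonneg_right hge hgx.le]
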